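/- Let G be the disjoint union of k pairwise vertex-disjoint copies of the star K_{1,k}. Then G is not proportionally k-choosable. -/

import Mathlib

open Finset

variable {V : Type*}

/-- The size of the color class of `c` under coloring `f`. -/
def colorClass [Fintype V] (f : V → ℕ) (c : ℕ) : ℕ :=
  (Finset.univ.filter fun v => f v = c).card

/-- The multiplicity of color `c` in the list assignment `L`. -/
def eta [Fintype V] (L : V → Finset ℕ) (c : ℕ) : ℕ :=
  (Finset.univ.filter fun v => c ∈ L v).card

/-- `f` is a proper `L`-coloring of `G`. -/
def IsProperListColoring (G : SimpleGraph V) (L : V → Finset ℕ) (f : V → ℕ) : Prop :=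
  (∀ v, f v ∈ L v) ∧ ∀ u v, G.Adj u v → f u ≠ f v

/-- `f` is a proportional `L`-coloring of `G`, for `k`-assignments `L`:
each palette color's class has size `⌊η/k⌋` or `⌈η/k⌉`. -/
def IsProportionalColoring [Fintype V] (G : SimpleGraph V) (L : V → Finset ℕ) (k : ℕ)
    (f : V → ℕ) : Prop :=
  IsProperListColoring G L f ∧
  ∀ c : ℕ, (∃ v, c ∈ L v) →
    colorClass f c = eta L c / k ∨ colorClass f c = (eta L c + k - 1) / k

/-- `G` is proportionally `k`-choosable. -/
def ProportionallyChoosable [Fintype V] (G : SimpleGraph V) (k : ℕ) : Prop :=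
  ∀ L : V → Finset ℕ, (∀ v, (L v).card = k) →
    ∃ f : V → ℕ, IsProportionalColoring G L k f

-- auxiliary arithmetic lemmas
lemma star_sep {k a a' b : ℕ} (h1 : a*k+1 ≤ b) (h2 : b < a*k+k)
    (h3 : a'*k+1 ≤ b) (h4 : b < a'*k+k) : a = a' := by
  rcases Nat.lt_trichotomy a a' with h|h|h
  · exfalso
    have h5 : a*k + k ≤ a'*k := by
      calc a*k + k = (a+1)*k := by ring
      _ ≤ a'*k := Nat.mul_le_mul_right _ h
    omega
  · exact h
  · exfalso
    have h5 : a'*k + k ≤ a*k := by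
      calc a'*k + k = (a'+1)*k := by ring
      _ ≤ a*k := Nat.mul_le_mul_right _ h
    omega

lemma leaf_lt {k : ℕ} (i : Fin k) : (i:ℕ)*k + k ≤ k*k := by
  have hi := i.isLt
  calc (i:ℕ)*k + k = ((i:ℕ)+1)*k := by ring
  _ ≤ k*k := Nat.mul_le_mul_right _ hi

/-- The bad list assignment. -/
def badL (k : ℕ) : Fin k × (Unit ⊕ Fin k) → Finset ℕ
  | (i, Sum.inl _) => insert 0 (Finset.Ico (k*k + (i:ℕ)*k + 1) (k*k + (i:ℕ)*k + k))
  | (i, Sum.inr _) => insert 0 (Finset.Ico ((i:ℕ)*k + 1) ((i:ℕ)*k + k))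

lemma badL_card (k : ℕ) (hk : 1 ≤ k) (v : Fin k × (Unit ⊕ Fin k)) :
    (badL k v).card = k := by
  rcases v with ⟨i, u|j⟩ <;>
  · rw [badL, Finset.card_insert_of_notMem (by simp), Nat.card_Ico]
    omega

lemma eta_zero (k : ℕ) : eta (badL k) 0 = k * (1 + k) := by
  unfold eta
  rw [Finset.filter_true_of_mem (fun v _ => by rcases v with ⟨i, u|j⟩ <;> simp [badL])]
  simp

lemma eta_leaf (k : ℕ) (i : Fin k) (b : ℕ)
    (hb1 : (i:ℕ)*k + 1 ≤ b) (hb2 : b < (i:ℕ)*k + k) :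
    eta (badL k) b = k := by
  unfold eta
  have key : (Finset.univ.filter fun v : Fin k × (Unit ⊕ Fin k) => b ∈ badL k v)
      = Finset.univ.image (fun j : Fin k => (i, Sum.inr j)) := by
    ext ⟨i', u|j⟩
    · simp only [Finset.mem_filter, Finset.mem_univ, true_and]; simp only [Finset.mem_univ, true_and, badL,
        Finset.mem_insert, Finset.mem_Ico, Finset.mem_image]
      have hl := leaf_lt i
      constructor
      · rintro (rfl|⟨h1,h2⟩) <;> omega
      · rintro ⟨j, hj⟩; simp at hj
    · simp only [Finset.mem_filter, Finset.mem_univ, true_and]; simp only [Finset.mem_univ, true_and, badL,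
        Finset.mem_insert, Finset.mem_Ico, Finset.mem_image]
      constructor
      · rintro (rfl|⟨h1,h2⟩)
        · omega
        · have : (i':ℕ) = (i:ℕ) := star_sep h1 h2 hb1 hb2
          exact ⟨j, by rw [Prod.ext_iff]; exact ⟨Fin.ext this.symm, rfl⟩⟩
      · rintro ⟨j', hj'⟩
        have hii : i = i' := congrArg Prod.fst hj'
        subst hii
        right
        exact ⟨hb1, hb2⟩
  rw [key, Finset.card_image_of_injective _ (fun a b h => by simpa using h), Finset.card_univ]
  simp

/-- The disjoint union of `k` copies of the star `K_{1,k}` is not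
proportionally `k`-choosable.  Copy `i` consists of the vertices with first
coordinate `i`; `Sum.inl` is the center, the `Sum.inr`s are the leaves. -/
theorem stmt_7 (k : ℕ) (hk : 1 ≤ k) :
    ¬ ProportionallyChoosable
        (SimpleGraph.fromRel fun x y : Fin k × (Unit ⊕ Fin k) =>
          x.1 = y.1 ∧ x.2.isLeft ∧ y.2.isRight) k := by
  intro hPC
  obtain ⟨f, ⟨⟨hmem, hadj⟩, hprop⟩⟩ := hPC (badL k) (badL_card k hk)
  set G := SimpleGraph.fromRel fun x y : Fin k × (Unit ⊕ Fin k) =>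
          x.1 = y.1 ∧ x.2.isLeft ∧ y.2.isRight with hG
  have i0 : Fin k := ⟨0, hk⟩
  -- color 0 is used exactly k+1 times
  have hcc0 : colorClass f 0 = k + 1 := by
    have h0 := hprop 0 ⟨(⟨0, hk⟩, Sum.inl ()), by simp [badL]⟩
    rw [eta_zero] at h0
    have e1 : k * (1 + k) / k = 1 + k := Nat.mul_div_cancel_left _ (by omega)
    have e2 : (k * (1 + k) + k - 1) / k = 1 + k := by
      have : k * (1 + k) + k - 1 = k * (1 + k) + (k - 1) := by omega
      rw [this, Nat.mul_add_div (by omega), Nat.div_eq_of_lt (by omega)]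
      omega
    omega
  -- each leaf-private color is used exactly once
  have hccb : ∀ (i : Fin k) (b : ℕ), (i:ℕ)*k + 1 ≤ b → b < (i:ℕ)*k + k →
      colorClass f b = 1 := by
    intro i b hb1 hb2
    have hw : b ∈ badL k (i, Sum.inr (⟨0, hk⟩ : Fin k)) := by
      simp [badL, Finset.mem_Ico]; omega
    have h0 := hprop b ⟨_, hw⟩
    rw [eta_leaf k i b hb1 hb2] at h0
    have e1 : k / k = 1 := Nat.div_self (by omega)
    have e2 : (k + k - 1) / k = 1 := Nat.div_eq_of_lt_le (by omega) (by omega)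
    omega
  -- per star, at most one leaf is colored 0
  have hS : ∀ i : Fin k,
      (Finset.univ.filter fun j : Fin k => f (i, Sum.inr j) = 0).card ≤ 1 := by
    intro i
    have hsub : Finset.Ico ((i:ℕ)*k + 1) ((i:ℕ)*k + k) ⊆
        (Finset.univ.filter fun j : Fin k => ¬ f (i, Sum.inr j) = 0).image
          (fun j => f (i, Sum.inr j)) := by
      intro b hb
      rw [Finset.mem_Ico] at hb
      have hcc := hccb i b hb.1 hb.2
      have hne : (Finset.univ.filter fun v => f v = b).Nonempty := by
        rw [← Finset.card_pos, ← colorClass] at *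
        omega
      obtain ⟨v, hv⟩ := hne
      rw [Finset.mem_filter] at hv
      have hfv := hv.2
      have hvl := hmem v
      rw [hfv] at hvl
      rcases v with ⟨i', u|j⟩
      · exfalso
        simp only [badL, Finset.mem_insert, Finset.mem_Ico] at hvl
        have hl := leaf_lt i
        omega
      · simp only [badL, Finset.mem_insert, Finset.mem_Ico] at hvl
        have hii : (i':ℕ) = (i:ℕ) := by
          rcases hvl with rfl|⟨h1,h2⟩
          · omega
          · exact star_sep h1 h2 hb.1 hb.2
        have : i' = i := Fin.ext hii
        subst this
        rw [Finset.mem_image]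
        exact ⟨j, by simp [hfv]; omega, hfv⟩
    have h1 : k - 1 ≤ (Finset.univ.filter fun j : Fin k => ¬ f (i, Sum.inr j) = 0).card := by
      calc k - 1 = (Finset.Ico ((i:ℕ)*k + 1) ((i:ℕ)*k + k)).card := by
            rw [Nat.card_Ico]; omega
      _ ≤ _ := le_trans (Finset.card_le_card hsub) (Finset.card_image_le)
    have h2 := Finset.card_filter_add_card_filter_not
      (s := (Finset.univ : Finset (Fin k))) (p := fun j : Fin k => f (i, Sum.inr j) = 0)
    rw [Finset.card_univ, Fintype.card_fin] at h2
    omega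
  -- the set of vertices colored 0 injects into Fin k
  have hinj : Set.InjOn (fun v : Fin k × (Unit ⊕ Fin k) => v.1)
      ↑(Finset.univ.filter fun v => f v = 0) := by
    intro u hu v hv huv
    simp only [Finset.coe_filter, Set.mem_setOf_eq] at hu hv
    rcases u with ⟨iu, cu⟩
    rcases v with ⟨iv, cv⟩
    simp only at huv
    subst huv
    rcases cu with u|ju <;> rcases cv with v|jv
    · cases u; cases v; rfl
    · exfalso
      exact hadj (iu, Sum.inl u) (iu, Sum.inr jv)
        (by rw [hG, SimpleGraph.fromRel_adj]; exact ⟨by simp, Or.inl ⟨rfl, by simp⟩⟩)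
        (by rw [hu.2, hv.2])
    · exfalso
      exact hadj (iu, Sum.inl v) (iu, Sum.inr ju)
        (by rw [hG, SimpleGraph.fromRel_adj]; exact ⟨by simp, Or.inl ⟨rfl, by simp⟩⟩)
        (by rw [hv.2, hu.2])
    · congr 1
      by_contra hne
      have hjne : ju ≠ jv := fun h => hne (by rw [h])
      have h2 : 1 < (Finset.univ.filter fun j : Fin k => f (iu, Sum.inr j) = 0).card :=
        Finset.one_lt_card.mpr ⟨ju, by simp [hu.2], jv, by simp [hv.2], hjne⟩
      have := hS iu
      omega
  have hle : colorClass f 0 ≤ k := by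
    unfold colorClass
    calc (Finset.univ.filter fun v => f v = 0).card
        ≤ (Finset.univ : Finset (Fin k)).card :=
          Finset.card_le_card_of_injOn _ (fun a _ => Finset.mem_univ _) hinj
    _ = k := by simp
  omega
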